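/- arXiv:2004.07024 — 3 statements merged into one kernel-verified Lean document; each statement's English description precedes it below -/
import Mathlib

section
/- With the notation of the bipartite setting, assume each g_μ is continuous, let λ > 0, and let t ↦ U_t be the (unique) solution of the linear ODE dU_t/dt = (Z + λ A_t^{11}) ∘ U_t with U_0 = id, where A_t^{11} = P₁ ∘ A_t ∘ P₁. Then each U_t is invertible and for all 0 ≤ s ≤ t one has P₀ ∘ U_t ∘ U_s^{−1} = P₀ ∘ e^{(t−s)Z}. -/
open Matrix Kronecker Complex
open scoped ComplexOrder

noncomputable section

attribute [local instance] Matrix.normedAddCommGroup Matrix.normedSpace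

/-- Partial trace over the second (environment) tensor factor, as a linear map. -/
def ptrEL (d m : ℕ) :
    Matrix (Fin d × Fin m) (Fin d × Fin m) ℂ →ₗ[ℂ] Matrix (Fin d) (Fin d) ℂ where
  toFun a := Matrix.of fun i j => ∑ k : Fin m, a (i, k) (j, k)
  map_add' a b := by ext i j; simp [Finset.sum_add_distrib]
  map_smul' c a := by ext i j; simp [Finset.mul_sum]

/-- Tensoring with a fixed environment state, as a linear map. -/
def kronR {d m : ℕ} (ρE : Matrix (Fin m) (Fin m) ℂ) :
    Matrix (Fin d) (Fin d) ℂ →ₗ[ℂ] Matrix (Fin d × Fin m) (Fin d × Fin m) ℂ where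
  toFun a := a ⊗ₖ ρE
  map_add' a b := Matrix.add_kronecker a b ρE
  map_smul' c a := Matrix.smul_kronecker c a ρE

/-- The projection `P₀(a) = (Tr_E a) ⊗ ρ_E`, as a continuous linear map. -/
def projP0L {d m : ℕ} (ρE : Matrix (Fin m) (Fin m) ℂ) :
    Matrix (Fin d × Fin m) (Fin d × Fin m) ℂ →L[ℂ] Matrix (Fin d × Fin m) (Fin d × Fin m) ℂ :=
  LinearMap.toContinuousLinearMap ((kronR ρE).comp (ptrEL d m))

/-- The commutator derivation `x ↦ −i[B, x]`, as a continuous linear map. -/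
def adL {n : Type*} [Fintype n] [DecidableEq n] (B : Matrix n n ℂ) :
    Matrix n n ℂ →L[ℂ] Matrix n n ℂ :=
  LinearMap.toContinuousLinearMap
    ((-Complex.I) • (LinearMap.mulLeft ℂ B - LinearMap.mulRight ℂ B))

/-- The interaction derivation `A_t = −i[Σ_μ g_μ(t) S_μ ⊗ R_μ, ·]`. -/
def intDerL {d m : ℕ} {ι : Type*} [Fintype ι]
    (S : ι → Matrix (Fin d) (Fin d) ℂ) (R : ι → Matrix (Fin m) (Fin m) ℂ)
    (g : ι → ℝ → ℂ) (t : ℝ) :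
    Matrix (Fin d × Fin m) (Fin d × Fin m) ℂ →L[ℂ] Matrix (Fin d × Fin m) (Fin d × Fin m) ℂ :=
  adL (∑ μ, g μ t • (S μ ⊗ₖ R μ))

/-- Helper (port): `ContinuousSMul ℝ` on the ℂ-linear operators on matrices, which instance
search no longer finds. It is a `Prop`, so it does not change the statement. -/
instance contSMulRealMatCLM {n : Type*} [Fintype n] :
    ContinuousSMul ℝ (Matrix n n ℂ →L[ℂ] Matrix n n ℂ) := by
  let _ : NormedAddCommGroup (Matrix n n ℂ →L[ℂ] Matrix n n ℂ) :=
    ContinuousLinearMap.toNormedAddCommGroup (σ₁₂ := RingHom.id ℂ)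
  let _ : NormedSpace ℝ (Matrix n n ℂ →L[ℂ] Matrix n n ℂ) := ContinuousLinearMap.toNormedSpace
  exact NormedSpace.toIsBoundedSMul.continuousSMul

/-- Helper (port): `IsTopologicalRing` on the ℂ-linear operators on matrices, needed by
`NormedSpace.exp`, which instance search no longer finds. A `Prop`, so harmless. -/
instance topRingMatCLM {n : Type*} [Fintype n] :
    IsTopologicalRing (Matrix n n ℂ →L[ℂ] Matrix n n ℂ) := by
  let N : NormedRing (Matrix n n ℂ →L[ℂ] Matrix n n ℂ) := ContinuousLinearMap.toNormedRing
  exact @NonUnitalSeminormedRing.toIsTopologicalRing _ N.toSeminormedRing.toNonUnitalSeminormedRing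

/-! ### Auxiliary lemmas -/

section AuxMatrix

variable {d m : ℕ}

lemma ptrE_kron (a : Matrix (Fin d) (Fin d) ℂ) (b : Matrix (Fin m) (Fin m) ℂ) :
    ptrEL d m (a ⊗ₖ b) = b.trace • a := by
  ext i j
  simp only [ptrEL, LinearMap.coe_mk, AddHom.coe_mk, Matrix.of_apply, kroneckerMap_apply,
    Matrix.smul_apply, Matrix.trace, Matrix.diag, smul_eq_mul, Finset.sum_mul]
  exact Finset.sum_congr rfl fun k _ => mul_comm _ _

lemma ptrE_kron1_mul (H : Matrix (Fin d) (Fin d) ℂ) (x : Matrix (Fin d × Fin m) (Fin d × Fin m) ℂ) :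
    ptrEL d m ((H ⊗ₖ (1 : Matrix (Fin m) (Fin m) ℂ)) * x) = H * ptrEL d m x := by
  ext i j
  simp only [ptrEL, LinearMap.coe_mk, AddHom.coe_mk, Matrix.of_apply, Matrix.mul_apply,
    Fintype.sum_prod_type, kroneckerMap_apply, Matrix.one_apply, mul_ite, mul_one, mul_zero,
    ite_mul, zero_mul, Finset.sum_ite_eq, Finset.mem_univ, if_true, Finset.mul_sum]
  exact Finset.sum_comm

lemma ptrE_mul_kron1 (H : Matrix (Fin d) (Fin d) ℂ) (x : Matrix (Fin d × Fin m) (Fin d × Fin m) ℂ) :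
    ptrEL d m (x * (H ⊗ₖ (1 : Matrix (Fin m) (Fin m) ℂ))) = ptrEL d m x * H := by
  ext i j
  simp only [ptrEL, LinearMap.coe_mk, AddHom.coe_mk, Matrix.of_apply, Matrix.mul_apply,
    Fintype.sum_prod_type, kroneckerMap_apply, Matrix.one_apply, mul_ite, mul_one, mul_zero,
    ite_mul, zero_mul, Finset.sum_ite_eq, Finset.sum_ite_eq', Finset.mem_univ, if_true,
    Finset.sum_mul]
  exact Finset.sum_comm

lemma ptrE_comm_kron2 (HE : Matrix (Fin m) (Fin m) ℂ)
    (x : Matrix (Fin d × Fin m) (Fin d × Fin m) ℂ) :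
    ptrEL d m (((1 : Matrix (Fin d) (Fin d) ℂ) ⊗ₖ HE) * x) =
      ptrEL d m (x * ((1 : Matrix (Fin d) (Fin d) ℂ) ⊗ₖ HE)) := by
  ext i j
  simp only [ptrEL, LinearMap.coe_mk, AddHom.coe_mk, Matrix.of_apply, Matrix.mul_apply,
    Fintype.sum_prod_type, kroneckerMap_apply, Matrix.one_apply, mul_ite, mul_one, mul_zero,
    ite_mul, zero_mul, one_mul, Finset.sum_ite_eq, Finset.sum_ite_eq', Finset.mem_univ, if_true]
  have h1 : ∀ x_1 : Fin m, (∑ x_2 : Fin d, ∑ x_3 : Fin m,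
      if i = x_2 then HE x_1 x_3 * x (x_2, x_3) (j, x_1) else 0)
      = ∑ x_3 : Fin m, HE x_1 x_3 * x (i, x_3) (j, x_1) := by
    intro x_1; rw [Finset.sum_comm]; simp
  have h2 : ∀ x_1 : Fin m, (∑ x_2 : Fin d, ∑ x_3 : Fin m,
      if x_2 = j then x (i, x_1) (x_2, x_3) * HE x_3 x_1 else 0)
      = ∑ x_3 : Fin m, x (i, x_1) (j, x_3) * HE x_3 x_1 := by
    intro x_1; rw [Finset.sum_comm]; simp
  simp_rw [h1, h2]
  rw [Finset.sum_comm]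
  exact Finset.sum_congr rfl fun k _ => Finset.sum_congr rfl fun q _ => mul_comm _ _

lemma projP0L_apply (ρE : Matrix (Fin m) (Fin m) ℂ)
    (x : Matrix (Fin d × Fin m) (Fin d × Fin m) ℂ) :
    projP0L ρE x = (ptrEL d m x) ⊗ₖ ρE := rfl

lemma adL_apply {n : Type*} [Fintype n] [DecidableEq n] (B x : Matrix n n ℂ) :
    adL B x = (-Complex.I) • (B * x - x * B) := rfl

lemma P0_idem (ρE : Matrix (Fin m) (Fin m) ℂ) (htr : ρE.trace = 1) :
    (projP0L (d := d) ρE) * (projP0L ρE) = projP0L ρE := by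
  ext x : 1
  rw [ContinuousLinearMap.mul_apply, projP0L_apply, projP0L_apply]
  rw [ptrE_kron, htr, one_smul]

lemma ptrE_comm_B (H : Matrix (Fin d) (Fin d) ℂ) (HE : Matrix (Fin m) (Fin m) ℂ)
    (x : Matrix (Fin d × Fin m) (Fin d × Fin m) ℂ) :
    ptrEL d m ((H ⊗ₖ (1 : Matrix (Fin m) (Fin m) ℂ)
        + (1 : Matrix (Fin d) (Fin d) ℂ) ⊗ₖ HE) * x
      - x * (H ⊗ₖ (1 : Matrix (Fin m) (Fin m) ℂ)
        + (1 : Matrix (Fin d) (Fin d) ℂ) ⊗ₖ HE))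
      = H * ptrEL d m x - ptrEL d m x * H := by
  rw [map_sub, add_mul, mul_add, map_add, map_add, ptrE_kron1_mul, ptrE_mul_kron1,
    ptrE_comm_kron2]
  abel

lemma P0Z_key (ρE : Matrix (Fin m) (Fin m) ℂ) (htr : ρE.trace = 1)
    (H : Matrix (Fin d) (Fin d) ℂ) (HE : Matrix (Fin m) (Fin m) ℂ) :
    (projP0L (d := d) ρE) * adL (H ⊗ₖ (1 : Matrix (Fin m) (Fin m) ℂ)
        + (1 : Matrix (Fin d) (Fin d) ℂ) ⊗ₖ HE)
      = (projP0L ρE) * adL (H ⊗ₖ (1 : Matrix (Fin m) (Fin m) ℂ)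
        + (1 : Matrix (Fin d) (Fin d) ℂ) ⊗ₖ HE) * (projP0L ρE) := by
  ext x : 1
  set B := H ⊗ₖ (1 : Matrix (Fin m) (Fin m) ℂ) + (1 : Matrix (Fin d) (Fin d) ℂ) ⊗ₖ HE with hB
  rw [ContinuousLinearMap.mul_apply, ContinuousLinearMap.mul_apply,
    ContinuousLinearMap.mul_apply, projP0L_apply, projP0L_apply, projP0L_apply]
  congr 1
  rw [adL_apply, adL_apply, _root_.map_smul, _root_.map_smul, hB, ptrE_comm_B, ptrE_comm_B]
  rw [ptrE_kron, htr, one_smul]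

lemma adL_add {n : Type*} [Fintype n] [DecidableEq n] (B C : Matrix n n ℂ) :
    adL (B + C) = adL B + adL C := by
  ext x : 1
  rw [ContinuousLinearMap.add_apply, adL_apply, adL_apply, adL_apply, ← smul_add]
  congr 1
  noncomm_ring

lemma adL_smul {n : Type*} [Fintype n] [DecidableEq n] (c : ℂ) (B : Matrix n n ℂ) :
    adL (c • B) = c • adL B := by
  ext x : 1
  rw [ContinuousLinearMap.smul_apply, adL_apply, adL_apply, smul_comm]
  congr 1
  rw [smul_mul_assoc, mul_smul_comm, ← smul_sub]

/-- `adL` as a linear map. -/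
def adLL (n : Type*) [Fintype n] [DecidableEq n] :
    Matrix n n ℂ →ₗ[ℂ] (Matrix n n ℂ →L[ℂ] Matrix n n ℂ) where
  toFun := adL
  map_add' := adL_add
  map_smul' := adL_smul

lemma intDerL_eq {d m : ℕ} {ι : Type*} [Fintype ι]
    (S : ι → Matrix (Fin d) (Fin d) ℂ) (R : ι → Matrix (Fin m) (Fin m) ℂ)
    (g : ι → ℝ → ℂ) (t : ℝ) :
    intDerL S R g t = ∑ μ, g μ t • adL (S μ ⊗ₖ R μ) := by
  have : intDerL S R g t = adLL _ (∑ μ, g μ t • (S μ ⊗ₖ R μ)) := rfl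
  rw [this, map_sum]
  refine Finset.sum_congr rfl fun μ _ => ?_
  rw [_root_.map_smul]
  rfl

end AuxMatrix

section AuxAlg

open NormedSpace

variable {A : Type*} [NormedRing A] [NormedAlgebra ℝ A] [CompleteSpace A]

lemma pow_corner (P Z : A) (hP : P * P = P) (hPZ : P * Z = P * Z * P) :
    ∀ n : ℕ, P * Z ^ n = P * Z ^ n * P := by
  intro n
  induction n with
  | zero => simpa using hP.symm
  | succ n ih =>
    have e1 : P * Z ^ (n + 1) = (P * Z ^ n) * Z := by rw [pow_succ, mul_assoc]
    have e2 : (P * Z ^ n) * Z = ((P * Z ^ n) * P) * Z := by rw [← ih]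
    have e3 : ((P * Z ^ n) * P) * Z = (P * Z ^ n) * (P * Z) := mul_assoc _ _ _
    have e4 : (P * Z ^ n) * (P * Z) = (P * Z ^ n) * (P * Z * P) := by rw [← hPZ]
    have e5 : (P * Z ^ n) * (P * Z * P) = ((P * Z ^ n) * (P * Z)) * P :=
      (mul_assoc (P * Z ^ n) (P * Z) P).symm
    have e6 : ((P * Z ^ n) * (P * Z)) * P = (((P * Z ^ n) * P) * Z) * P :=
      congrArg (· * P) e3.symm
    have e7 : (((P * Z ^ n) * P) * Z) * P = ((P * Z ^ n) * Z) * P :=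
      congrArg (· * P) e2.symm
    have e8 : ((P * Z ^ n) * Z) * P = P * Z ^ (n + 1) * P :=
      congrArg (· * P) e1.symm
    exact e1.trans (e2.trans (e3.trans (e4.trans (e5.trans (e6.trans (e7.trans e8))))))

lemma exp_corner (P Z : A) (hP : P * P = P) (hPZ : P * Z = P * Z * P) (r : ℝ) :
    P * exp (r • Z) = P * exp (r • Z) * P := by
  have hs := NormedSpace.expSeries_summable' (𝕂 := ℝ) (r • Z)
  rw [exp_eq_tsum ℝ, ← hs.tsum_mul_left P, ← (hs.mul_left P).tsum_mul_right P]
  refine tsum_congr fun n => ?_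
  rw [smul_pow, mul_smul_comm, mul_smul_comm, smul_mul_assoc, smul_mul_assoc,
    ← pow_corner P Z hP hPZ n]

lemma ode_zero (C : A) (X : ℝ → A) (hX : ∀ t, HasDerivAt X (C * X t) t) (h0 : X 0 = 0)
    (t : ℝ) : X t = 0 := by
  have hYd : ∀ u : ℝ, HasDerivAt (fun v : ℝ => exp (-(v • C)) * X v) 0 u := by
    intro u
    have hg : HasDerivAt (fun v : ℝ => -v) (-1 : ℝ) u := hasDerivAt_neg u
    have h1 : HasDerivAt (fun v : ℝ => exp (-(v • C))) (-(C * exp (-(u • C)))) u := by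
      have := HasDerivAt.scomp u (hasDerivAt_exp_smul_const' (𝕂 := ℝ) C (-u)) hg
      simpa [Function.comp_def, neg_smul] using this
    have h2 := h1.mul (hX u)
    have h : Commute C (-(u • C)) := ((Commute.refl C).smul_right u).neg_right
    have hcomm := h.exp_right.symm.eq
    have hzero : (-(C * exp (-(u • C)))) * X u + exp (-(u • C)) * (C * X u) = 0 := by
      rw [← mul_assoc, hcomm, neg_mul, neg_add_cancel]
    rw [hzero] at h2
    exact h2
  have hconst : ∀ u : ℝ, exp (-(u • C)) * X u = exp (-((0:ℝ) • C)) * X 0 :=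
    fun u => is_const_of_deriv_eq_zero (fun v => (hYd v).differentiableAt)
      (fun v => (hYd v).deriv) u 0
  have hYt : exp (-(t • C)) * X t = 0 := by
    rw [hconst t, h0, mul_zero]
  have hinv : exp (t • C) * exp (-(t • C)) = 1 := by
    rw [← NormedSpace.exp_add_of_commute_of_mem_ball (𝕂 := ℝ) ((Commute.refl (t • C)).neg_right)
      ((expSeries_radius_eq_top ℝ A).symm ▸ edist_lt_top _ _)
      ((expSeries_radius_eq_top ℝ A).symm ▸ edist_lt_top _ _)]
    simp
  calc X t = (exp (t • C) * exp (-(t • C))) * X t := by rw [hinv, one_mul]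
    _ = exp (t • C) * (exp (-(t • C)) * X t) := by rw [mul_assoc]
    _ = 0 := by rw [hYt, mul_zero]

end AuxAlg

/-- Port helper: the operator-norm ring structure on `ℂ`-linear operators on matrices. -/
abbrev matCLMNormedRing (n : Type*) [Fintype n] [DecidableEq n] :
    NormedRing (Matrix n n ℂ →L[ℂ] Matrix n n ℂ) :=
  let N : NormedRing (Matrix n n ℂ →L[ℂ] Matrix n n ℂ) := ContinuousLinearMap.toNormedRing
  { (inferInstance : Ring (Matrix n n ℂ →L[ℂ] Matrix n n ℂ)) with
    toNorm := N.toNorm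
    toMetricSpace := N.toMetricSpace.replaceUniformity rfl
    dist_eq := N.dist_eq
    norm_mul_le := N.norm_mul_le }

/-- Port helper: the real normed algebra structure. -/
abbrev matCLMNormedAlgReal (n : Type*) [Fintype n] [DecidableEq n] :
    @NormedAlgebra ℝ (Matrix n n ℂ →L[ℂ] Matrix n n ℂ) _ (matCLMNormedRing n).toSeminormedRing :=
  letI := matCLMNormedRing n
  { Algebra.ofModule (R := ℝ) (A := Matrix n n ℂ →L[ℂ] Matrix n n ℂ)
      (fun r x y => ContinuousLinearMap.smul_comp r x y) (fun r x y => x.comp_smul r y) with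
    norm_smul_le := fun r x => by exact ContinuousLinearMap.opNorm_smul_le r x }

/-- Port helper: completeness. -/
theorem matCLMComplete (n : Type*) [Fintype n] [DecidableEq n] :
    CompleteSpace (Matrix n n ℂ →L[ℂ] Matrix n n ℂ) := by
  let N : NormedRing (Matrix n n ℂ →L[ℂ] Matrix n n ℂ) := ContinuousLinearMap.toNormedRing
  let _ : NormedSpace ℂ (Matrix n n ℂ →L[ℂ] Matrix n n ℂ) := ContinuousLinearMap.toNormedSpace
  exact FiniteDimensional.complete ℂ _

set_option maxHeartbeats 1600000
set_option synthInstance.maxHeartbeats 1000000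

/-- if `U` solves `dU_t/dt = (Z + λ A_t^{11}) ∘ U_t`, `U_0 = id`, then each
`U_t` is invertible and `P₀ ∘ U_t ∘ U_s⁻¹ = P₀ ∘ e^{(t−s)Z}` for `0 ≤ s ≤ t`. -/
theorem stmt2 {d m : ℕ} {ι : Type*} [Fintype ι]
    (ρE : Matrix (Fin m) (Fin m) ℂ) (hρE : ρE.PosSemidef) (hρEtr : ρE.trace = 1)
    (H : Matrix (Fin d) (Fin d) ℂ) (hH : H.IsHermitian)
    (HE : Matrix (Fin m) (Fin m) ℂ) (hHE : HE.IsHermitian)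
    (S : ι → Matrix (Fin d) (Fin d) ℂ) (R : ι → Matrix (Fin m) (Fin m) ℂ)
    (hR : ∀ μ, (R μ * ρE).trace = 0)
    (g : ι → ℝ → ℂ) (hg : ∀ μ, Continuous (g μ))
    (lam : ℝ) (hlam : 0 < lam)
    (Z P0 P1 : Matrix (Fin d × Fin m) (Fin d × Fin m) ℂ →L[ℂ]
        Matrix (Fin d × Fin m) (Fin d × Fin m) ℂ)
    (hZ : Z = adL (H ⊗ₖ (1 : Matrix (Fin m) (Fin m) ℂ) +
                   (1 : Matrix (Fin d) (Fin d) ℂ) ⊗ₖ HE))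
    (hP0 : P0 = projP0L ρE) (hP1 : P1 = 1 - P0)
    (U : ℝ → (Matrix (Fin d × Fin m) (Fin d × Fin m) ℂ →L[ℂ]
        Matrix (Fin d × Fin m) (Fin d × Fin m) ℂ))
    (hU0 : U 0 = 1)
    (hU : ∀ t : ℝ, HasDerivAt U
        ((Z + lam • (P1.comp ((intDerL S R g t).comp P1))) * U t) t) :
    (∀ t : ℝ, IsUnit (U t)) ∧
    ∀ s t : ℝ, 0 ≤ s → s ≤ t →
      P0.comp (U t * Ring.inverse (U s)) =
        P0.comp (NormedSpace.exp ((t - s) • Z)) := by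
  classical
  set L : ℝ → (Matrix (Fin d × Fin m) (Fin d × Fin m) ℂ →L[ℂ]
      Matrix (Fin d × Fin m) (Fin d × Fin m) ℂ) :=
    fun t => Z + lam • (P1.comp ((intDerL S R g t).comp P1)) with hLdef
  -- basic algebraic facts
  have hP0P0 : P0 * P0 = P0 := by rw [hP0]; exact P0_idem ρE hρEtr
  have hP0Z : P0 * Z = P0 * Z * P0 := by rw [hP0, hZ]; exact P0Z_key ρE hρEtr H HE
  have hP0P1 : P0 * P1 = 0 := by
    rw [hP1, mul_sub, mul_one, hP0P0, sub_self]
  have hmul_smulR : ∀ (c : ℝ) (A B : Matrix (Fin d × Fin m) (Fin d × Fin m) ℂ →L[ℂ]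
      Matrix (Fin d × Fin m) (Fin d × Fin m) ℂ), A * (c • B) = c • (A * B) :=
    fun c A B => A.comp_smul c B
  have hsmul_mulC : ∀ (c : ℂ) (A B : Matrix (Fin d × Fin m) (Fin d × Fin m) ℂ →L[ℂ]
      Matrix (Fin d × Fin m) (Fin d × Fin m) ℂ), (c • A) * B = c • (A * B) :=
    fun c A B => ContinuousLinearMap.smul_comp c A B
  have hsmul_mulR : ∀ (c : ℝ) (A B : Matrix (Fin d × Fin m) (Fin d × Fin m) ℂ →L[ℂ]
      Matrix (Fin d × Fin m) (Fin d × Fin m) ℂ), (c • A) * B = c • (A * B) :=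
    fun c A B => ContinuousLinearMap.smul_comp c A B
  have hmul_smulC : ∀ (c : ℂ) (A B : Matrix (Fin d × Fin m) (Fin d × Fin m) ℂ →L[ℂ]
      Matrix (Fin d × Fin m) (Fin d × Fin m) ℂ), A * (c • B) = c • (A * B) :=
    fun c A B => A.comp_smul c B
  have hP0L : ∀ t, P0 * L t = P0 * Z := by
    intro t
    have hunf : L t = Z + lam • (P1.comp ((intDerL S R g t).comp P1)) := rfl
    rw [hunf, mul_add, hmul_smulR]
    have : P0 * (P1.comp ((intDerL S R g t).comp P1))
        = (P0 * P1) * ((intDerL S R g t) * P1) := by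
      rw [mul_assoc]; rfl
    rw [this, hP0P1, zero_mul, smul_zero, add_zero]
  -- continuity of L
  have hLcont : Continuous L := by
    have hL' : L = fun t => Z + lam • ∑ μ, g μ t •
        (P1 * (adL (S μ ⊗ₖ R μ) * P1)) := by
      funext t
      show Z + lam • (P1.comp ((intDerL S R g t).comp P1)) = _
      congr 1
      congr 1
      rw [intDerL_eq]
      show P1 * ((∑ μ, g μ t • adL (S μ ⊗ₖ R μ)) * P1) = _
      rw [Finset.sum_mul, Finset.mul_sum]
      exact Finset.sum_congr rfl fun μ _ => by rw [hsmul_mulC, hmul_smulC]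
    rw [hL']
    refine continuous_const.add (Continuous.const_smul ?_ lam)
    exact continuous_finset_sum _ fun μ _ => ((hg μ).smul continuous_const)
  -- invertibility
  have hunit : ∀ t : ℝ, IsUnit (U t) := by
    intro t₀
    refine ContinuousLinearMap.isUnit_iff_bijective.mpr (?_ : Function.Bijective (U t₀))
    have hker : ∀ w₀, U t₀ w₀ = 0 → w₀ = 0 := by
      intro w₀ hw
      set a : ℝ := -(|t₀| + 1) with ha
      set b : ℝ := |t₀| + 1 with hb
      have hab : a ≤ b := by
        rw [ha, hb]
        have : (0:ℝ) ≤ |t₀| + 1 := by positivity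
        linarith
      -- bound on L over Icc a b
      letI := matCLMNormedRing (Fin d × Fin m)
      obtain ⟨Cb, hCb⟩ := (isCompact_Icc (a := a) (b := b)).exists_bound_of_continuousOn
        hLcont.continuousOn
      set K : NNReal := ⟨max Cb 0, le_max_right _ _⟩ with hK
      set vf : ℝ → Matrix (Fin d × Fin m) (Fin d × Fin m) ℂ →
          Matrix (Fin d × Fin m) (Fin d × Fin m) ℂ :=
        fun r y => L (max a (min r b)) y with hvf
      have hclamp : ∀ r, max a (min r b) ∈ Set.Icc a b := by
        intro r
        exact ⟨le_max_left _ _, max_le hab (min_le_right _ _)⟩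
      have hlip : ∀ r, LipschitzOnWith K (vf r) Set.univ := by
        intro r
        refine LipschitzWith.lipschitzOnWith ?_
        refine LipschitzWith.weaken ((L (max a (min r b))).lipschitz) ?_
        rw [← NNReal.coe_le_coe]
        calc (‖L (max a (min r b))‖₊ : ℝ) = ‖L (max a (min r b))‖ := rfl
          _ ≤ Cb := hCb _ (hclamp r)
          _ ≤ max Cb 0 := le_max_left _ _
      have hmem : t₀ ∈ Set.Ioo a b := by
        constructor
        · rw [ha]; cases abs_cases t₀ with
          | inl h => nlinarith [h.1, abs_nonneg t₀]
          | inr h => nlinarith [h.1, abs_nonneg t₀]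
        · rw [hb]; cases abs_cases t₀ with
          | inl h => nlinarith
          | inr h => nlinarith
      have hfd : ∀ r : ℝ, HasDerivAt (fun u => U u w₀) (L r ((U r) w₀)) r := by
        intro r
        have := (((ContinuousLinearMap.apply ℂ
            (Matrix (Fin d × Fin m) (Fin d × Fin m) ℂ) w₀).restrictScalars
            ℝ).hasFDerivAt).comp_hasDerivAt r (hU r)
        exact this
      have key := ODE_solution_unique_of_mem_Icc (v := vf) (s := fun _ => Set.univ)
        (K := K) (f := fun u => U u w₀) (g := fun _ => 0)
        (fun r _ => hlip r) hmem
        (Continuous.continuousOn (continuous_iff_continuousAt.mpr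
          fun r => (hfd r).continuousAt))
        (fun r hr => by
          have hcl : max a (min r b) = r := by
            rw [min_eq_left hr.2.le, max_eq_right hr.1.le]
          have := hfd r
          rw [hvf]
          simp only [hcl]
          exact this)
        (fun _ _ => trivial)
        continuousOn_const
        (fun r hr => by
          have : vf r 0 = 0 := by rw [hvf]; simp only []; rw [map_zero]
          rw [this]
          exact hasDerivAt_const r 0)
        (fun _ _ => trivial)
        (by simpa using hw)
      have h0mem : (0:ℝ) ∈ Set.Icc a b := by
        constructor
        · rw [ha]; nlinarith [abs_nonneg t₀]
        · rw [hb]; nlinarith [abs_nonneg t₀]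
      have := key h0mem
      simpa [hU0] using this
    constructor
    · intro v w hvw
      have : U t₀ (v - w) = 0 := by rw [map_sub, hvw, sub_self]
      have := hker _ this
      exact sub_eq_zero.mp this
    · intro y
      have hinj : Function.Injective (U t₀) := by
        intro v w hvw
        have : U t₀ (v - w) = 0 := by rw [map_sub, hvw, sub_self]
        exact sub_eq_zero.mp (hker _ this)
      have hsurj := LinearMap.injective_iff_surjective.mp
        (show Function.Injective (U t₀ : Matrix (Fin d × Fin m) (Fin d × Fin m) ℂ →ₗ[ℂ]
          Matrix (Fin d × Fin m) (Fin d × Fin m) ℂ) from hinj)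
      exact hsurj y
  letI := matCLMNormedRing (Fin d × Fin m)
  letI := matCLMNormedAlgReal (Fin d × Fin m)
  haveI := matCLMComplete (Fin d × Fin m)
  -- the intertwining identity
  have hPU : ∀ u : ℝ, P0 * U u = P0 * NormedSpace.exp (u • Z) := by
    have hX : ∀ u : ℝ, HasDerivAt
        (fun u => P0 * U u - P0 * NormedSpace.exp (u • Z))
        ((P0 * Z) * (P0 * U u - P0 * NormedSpace.exp (u • Z))) u := by
      intro u
      have h1 : HasDerivAt (fun u => P0 * U u) ((P0 * Z) * (P0 * U u)) u := by
        have := (hU u).const_mul P0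
        refine this.congr_deriv (Eq.symm ?_)
        show (P0 * Z) * (P0 * U u) = P0 * (L u * U u)
        rw [← mul_assoc, ← hP0Z, ← hP0L u, mul_assoc]
      have h2 : HasDerivAt (fun u => P0 * NormedSpace.exp (u • Z))
          ((P0 * Z) * (P0 * NormedSpace.exp (u • Z))) u := by
        have := (hasDerivAt_exp_smul_const' (𝕂 := ℝ) Z u).const_mul P0
        refine this.congr_deriv (Eq.symm ?_)
        rw [← mul_assoc, ← hP0Z, mul_assoc]
      have := h1.sub h2
      refine this.congr_deriv (Eq.symm ?_)
      rw [mul_sub]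
    have h0 : P0 * U 0 - P0 * NormedSpace.exp ((0:ℝ) • Z) = 0 := by
      rw [hU0, zero_smul ℝ Z, NormedSpace.exp_zero, sub_self]
    intro u
    have := ode_zero (P0 * Z) _ hX h0 u
    exact sub_eq_zero.mp this
  refine ⟨hunit, ?_⟩
  intro s t _ _
  show P0 * (U t * Ring.inverse (U s)) = P0 * NormedSpace.exp ((t - s) • Z)
  have hexpC : NormedSpace.exp ((t - s) • Z) = NormedSpace.exp ((t - s) • Z) :=
    rfl
  rw [hexpC]
  set E1 := NormedSpace.exp ((t - s) • Z) with hE1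
  set E2 := NormedSpace.exp (s • Z) with hE2
  set W := Ring.inverse (U s) with hW
  have f1 : P0 * E1 = P0 * E1 * P0 := exp_corner P0 Z hP0P0 hP0Z (t - s)
  have f2 : P0 * E2 = P0 * U s := (hPU s).symm
  have f3 : U s * W = 1 := Ring.mul_inverse_cancel _ (hunit s)
  have hcomm : Commute ((t - s) • Z) (s • Z) := by
    show ((t - s) • Z) * (s • Z) = (s • Z) * ((t - s) • Z)
    rw [hsmul_mulR, hmul_smulR, hsmul_mulR, hmul_smulR, smul_comm]
  have hsplit : NormedSpace.exp (t • Z) = E1 * E2 := by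
    rw [hE1, hE2, ← NormedSpace.exp_add_of_commute_of_mem_ball (𝕂 := ℝ) hcomm
        ((NormedSpace.expSeries_radius_eq_top ℝ (Matrix (Fin d × Fin m) (Fin d × Fin m) ℂ →L[ℂ]
          Matrix (Fin d × Fin m) (Fin d × Fin m) ℂ)).symm ▸ edist_lt_top _ _)
        ((NormedSpace.expSeries_radius_eq_top ℝ (Matrix (Fin d × Fin m) (Fin d × Fin m) ℂ →L[ℂ]
          Matrix (Fin d × Fin m) (Fin d × Fin m) ℂ)).symm ▸ edist_lt_top _ _), ← add_smul (t - s) s Z,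
      sub_add_cancel]
  calc P0 * (U t * W)
      = (P0 * U t) * W := (mul_assoc _ _ _).symm
    _ = (P0 * (E1 * E2)) * W := by rw [hPU t, hsplit]
    _ = ((P0 * E1) * E2) * W := by rw [mul_assoc P0 E1 E2]
    _ = (((P0 * E1) * P0) * E2) * W := by rw [← f1]
    _ = ((P0 * E1) * (P0 * E2)) * W := by rw [mul_assoc (P0 * E1) P0 E2]
    _ = ((P0 * E1) * (P0 * U s)) * W := by rw [f2]
    _ = (P0 * E1) * ((P0 * U s) * W) := mul_assoc _ _ _
    _ = (P0 * E1) * (P0 * (U s * W)) := by rw [mul_assoc P0 (U s) W]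
    _ = (P0 * E1) * (P0 * 1) := by rw [f3]
    _ = (P0 * E1) * P0 := by rw [mul_one]
    _ = P0 * E1 := f1.symm
end
end

section
/- (Neumann series solution of the Volterra equation.) Let X, t*, V, k, C and the Volterra operator K(φ)(t) = ∫_0^t k(t,s)(φ(s)) ds be as in the Volterra iterate bound. Then for every w ∈ V, the equation v = w + K(v) has a unique solution v ∈ V, and this solution is given by the absolutely convergent series v = Σ_{n=0}^∞ K^n(w). -/
open Set

noncomputable section

/-- The iterates `K^n(φ)` of the Volterra integral operator
`K(φ)(t) = ∫_0^t k(t,s)(φ(s)) ds`. -/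
def volterraIter {X : Type*} [NormedAddCommGroup X] [NormedSpace ℂ X]
    (k : ℝ → ℝ → (X →L[ℂ] X)) (φ : ℝ → X) : ℕ → ℝ → X
  | 0 => φ
  | n + 1 => fun t => ∫ s in (0:ℝ)..t, k t s (volterraIter k φ n s)

namespace VolterraAux

open MeasureTheory intervalIntegral

set_option linter.unusedSectionVars false

/-- clamp to `[0, tstar]`. -/
def pc (tstar t : ℝ) : ℝ := max 0 (min t tstar)

/-- clamp to `[0, pc tstar t]`. -/
def qc (tstar t s : ℝ) : ℝ := max 0 (min s (pc tstar t))

variable {tstar t s : ℝ}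

lemma pc_nonneg : 0 ≤ pc tstar t := le_max_left _ _
lemma pc_le (h : 0 ≤ tstar) : pc tstar t ≤ tstar := max_le h (min_le_right _ _)
lemma pc_eq (ht : t ∈ Icc 0 tstar) : pc tstar t = t := by
  rw [pc, min_eq_left ht.2, max_eq_right ht.1]
lemma qc_nonneg : 0 ≤ qc tstar t s := le_max_left _ _
lemma qc_le_pc : qc tstar t s ≤ pc tstar t := max_le pc_nonneg (min_le_right _ _)
lemma qc_eq (ht : t ∈ Icc 0 tstar) (hs : s ∈ Icc 0 t) : qc tstar t s = s := by
  rw [qc, pc_eq ht, min_eq_left hs.2, max_eq_right hs.1]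

variable {X : Type*} [NormedAddCommGroup X] [NormedSpace ℂ X]

/-- extended kernel, defined and continuous on all of `ℝ²`. -/
def kext (tstar : ℝ) (k : ℝ → ℝ → (X →L[ℂ] X)) (t s : ℝ) : X →L[ℂ] X :=
  k (pc tstar t) (qc tstar t s)

variable {C : ℝ} {k : ℝ → ℝ → (X →L[ℂ] X)} {w : ℝ → X}

lemma continuous_kext (h0 : 0 ≤ tstar)
    (hk : ContinuousOn (fun p : ℝ × ℝ => k p.1 p.2)
      {p : ℝ × ℝ | 0 ≤ p.2 ∧ p.2 ≤ p.1 ∧ p.1 ≤ tstar}) :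
    Continuous fun p : ℝ × ℝ => kext tstar k p.1 p.2 := by
  have hc : Continuous fun p : ℝ × ℝ => (pc tstar p.1, qc tstar p.1 p.2) := by
    simp only [pc, qc]; fun_prop
  exact hk.comp_continuous hc fun p => ⟨qc_nonneg, qc_le_pc, pc_le h0⟩

lemma norm_kext_le (h0 : 0 ≤ tstar)
    (hkC : ∀ t s : ℝ, 0 ≤ s → s ≤ t → t ≤ tstar → ‖k t s‖ ≤ C) (t s : ℝ) :
    ‖kext tstar k t s‖ ≤ C :=
  hkC _ _ qc_nonneg qc_le_pc (pc_le h0)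

lemma kext_eq (ht : t ∈ Icc 0 tstar) (hs : s ∈ Icc 0 t) : kext tstar k t s = k t s := by
  rw [kext, pc_eq ht, qc_eq ht hs]

/-- the globally-defined iterates. -/
def psi (tstar : ℝ) (k : ℝ → ℝ → (X →L[ℂ] X)) (w : ℝ → X) : ℕ → ℝ → X
  | 0 => fun t => w (pc tstar t)
  | n + 1 => fun t => ∫ s in (0:ℝ)..t, kext tstar k t s (psi tstar k w n s)

variable [CompleteSpace X]

lemma psi_cont (h0 : 0 ≤ tstar)
    (hk : ContinuousOn (fun p : ℝ × ℝ => k p.1 p.2)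
      {p : ℝ × ℝ | 0 ≤ p.2 ∧ p.2 ≤ p.1 ∧ p.1 ≤ tstar})
    (hw : ContinuousOn w (Icc 0 tstar)) :
    ∀ n, Continuous (psi tstar k w n)
  | 0 => hw.comp_continuous
      (continuous_const.max (continuous_id.min continuous_const))
      (fun t => ⟨pc_nonneg, pc_le h0⟩)
  | n + 1 => by
    have h1 := psi_cont h0 hk hw n
    have h2 : Continuous
        (Function.uncurry fun t s => kext tstar k t s (psi tstar k w n s)) :=
      (continuous_kext h0 hk).clm_apply (h1.comp continuous_snd)
    exact intervalIntegral.continuous_parametric_intervalIntegral_of_continuous h2 continuous_id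

lemma psi_agree (h0 : 0 ≤ tstar) :
    ∀ n, ∀ t ∈ Icc (0:ℝ) tstar, volterraIter k w n t = psi tstar k w n t
  | 0, t, ht => by simp [volterraIter, psi, pc_eq ht]
  | n + 1, t, ht => by
    show (∫ s in (0:ℝ)..t, k t s (volterraIter k w n s))
        = ∫ s in (0:ℝ)..t, kext tstar k t s (psi tstar k w n s)
    apply intervalIntegral.integral_congr
    intro s hs
    rw [uIcc_of_le ht.1] at hs
    show (k t s) (volterraIter k w n s) = (kext tstar k t s) (psi tstar k w n s)
    rw [kext_eq ht hs, psi_agree h0 n s ⟨hs.1, hs.2.trans ht.2⟩]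

lemma bound_step (h0 : 0 ≤ tstar) (hC : 0 ≤ C)
    (hkC : ∀ t s : ℝ, 0 ≤ s → s ≤ t → t ≤ tstar → ‖k t s‖ ≤ C)
    {φ : ℝ → X} {B : ℝ} (hB : 0 ≤ B) {n : ℕ}
    (hφ : ∀ s ∈ Icc (0:ℝ) tstar, ‖φ s‖ ≤ B * (C ^ n * s ^ n / n.factorial))
    (ht : t ∈ Icc (0:ℝ) tstar) :
    ‖∫ s in (0:ℝ)..t, kext tstar k t s (φ s)‖
      ≤ B * (C ^ (n + 1) * t ^ (n + 1) / (n + 1).factorial) := by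
  have key : ‖∫ s in (0:ℝ)..t, kext tstar k t s (φ s)‖
      ≤ |∫ s in (0:ℝ)..t, (B * C ^ (n + 1) / n.factorial) * s ^ n| := by
    apply intervalIntegral.norm_integral_le_abs_of_norm_le
    · filter_upwards [ae_restrict_mem measurableSet_uIoc] with s hs
      rw [uIoc_of_le ht.1] at hs
      have hs' : s ∈ Icc (0:ℝ) tstar := ⟨hs.1.le, hs.2.trans ht.2⟩
      calc ‖kext tstar k t s (φ s)‖ ≤ ‖kext tstar k t s‖ * ‖φ s‖ :=
            (kext tstar k t s).le_opNorm _
        _ ≤ C * (B * (C ^ n * s ^ n / n.factorial)) := by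
            apply mul_le_mul (norm_kext_le h0 hkC t s) (hφ s hs') (norm_nonneg _) hC
        _ = (B * C ^ (n + 1) / n.factorial) * s ^ n := by ring
    · exact (continuous_const.mul (continuous_pow n)).intervalIntegrable 0 t
  rw [intervalIntegral.integral_const_mul, integral_pow] at key
  have hfac : ((n + 1).factorial : ℝ) = (n + 1) * n.factorial := by
    exact_mod_cast Nat.factorial_succ n
  have heq : B * C ^ (n + 1) / n.factorial * ((t ^ (n + 1) - 0 ^ (n + 1)) / (n + 1))
      = B * (C ^ (n + 1) * t ^ (n + 1) / (n + 1).factorial) := by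
    rw [hfac]
    have h1 : (n.factorial : ℝ) ≠ 0 := Nat.cast_ne_zero.2 n.factorial_ne_zero
    have h2 : ((n : ℝ) + 1) ≠ 0 := by positivity
    field_simp
    ring
  rw [heq] at key
  refine key.trans_eq (abs_of_nonneg ?_)
  have ht0 := ht.1
  positivity

lemma bnd_mono {M : ℝ} (hC : 0 ≤ C) (hM : 0 ≤ M) (ht : t ∈ Icc (0:ℝ) tstar) (n : ℕ) :
    M * (C ^ n * t ^ n / n.factorial) ≤ M * ((C * tstar) ^ n / n.factorial) := by
  have h1 : C ^ n * t ^ n ≤ (C * tstar) ^ n := by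
    rw [← mul_pow]
    exact pow_le_pow_left₀ (mul_nonneg hC ht.1) (mul_le_mul_of_nonneg_left ht.2 hC) n
  gcongr

lemma psi_bound (h0 : 0 ≤ tstar) (hC : 0 ≤ C)
    (hkC : ∀ t s : ℝ, 0 ≤ s → s ≤ t → t ≤ tstar → ‖k t s‖ ≤ C)
    {M : ℝ} (hM0 : 0 ≤ M) (hM : ∀ r ∈ Icc (0:ℝ) tstar, ‖w r‖ ≤ M) :
    ∀ n, ∀ t ∈ Icc (0:ℝ) tstar, ‖psi tstar k w n t‖ ≤ M * (C ^ n * t ^ n / n.factorial)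
  | 0, t, ht => by
    simpa [psi, pc_eq ht] using hM t ht
  | n + 1, t, ht =>
    bound_step h0 hC hkC hM0 (fun s hs => psi_bound h0 hC hkC hM0 hM n s hs) ht

end VolterraAux

open MeasureTheory intervalIntegral VolterraAux

/-- Neumann series solution of the Volterra equation: for a jointly
continuous kernel, bounded by `C` on the triangle, and any continuous `w`, the equation
`v = w + K(v)` has a unique continuous solution on `[0,t*]`, given by the absolutely
convergent Neumann series `v = Σ_{n≥0} K^n(w)`. -/
theorem stmt11 (X : Type*) [NormedAddCommGroup X] [NormedSpace ℂ X] [CompleteSpace X]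
    (tstar : ℝ) (htstar : 0 < tstar) (C : ℝ)
    (k : ℝ → ℝ → (X →L[ℂ] X))
    (hk : ContinuousOn (fun p : ℝ × ℝ => k p.1 p.2)
      {p : ℝ × ℝ | 0 ≤ p.2 ∧ p.2 ≤ p.1 ∧ p.1 ≤ tstar})
    (hkC : ∀ t s : ℝ, 0 ≤ s → s ≤ t → t ≤ tstar → ‖k t s‖ ≤ C)
    (w : ℝ → X) (hw : ContinuousOn w (Set.Icc 0 tstar)) :
    ∃ v : ℝ → X,
      ContinuousOn v (Set.Icc 0 tstar) ∧
      (∀ t ∈ Set.Icc (0:ℝ) tstar, v t = w t + ∫ s in (0:ℝ)..t, k t s (v s)) ∧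
      (∀ t ∈ Set.Icc (0:ℝ) tstar, HasSum (fun n : ℕ => volterraIter k w n t) (v t)) ∧
      Summable (fun n : ℕ => ⨆ t ∈ Set.Icc (0:ℝ) tstar, ‖volterraIter k w n t‖) ∧
      (∀ v' : ℝ → X, ContinuousOn v' (Set.Icc 0 tstar) →
        (∀ t ∈ Set.Icc (0:ℝ) tstar, v' t = w t + ∫ s in (0:ℝ)..t, k t s (v' s)) →
        ∀ t ∈ Set.Icc (0:ℝ) tstar, v' t = v t) := by
  have h0 : (0:ℝ) ≤ tstar := htstar.le
  have hC0 : 0 ≤ C := (norm_nonneg _).trans (hkC 0 0 le_rfl le_rfl h0)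
  obtain ⟨M₀, hM₀⟩ := isCompact_Icc.exists_bound_of_continuousOn hw
  set M := max M₀ 0 with hMdef
  have hM0 : 0 ≤ M := le_max_right _ _
  have hM : ∀ r ∈ Icc (0:ℝ) tstar, ‖w r‖ ≤ M := fun r hr => (hM₀ r hr).trans (le_max_left _ _)
  set u : ℕ → ℝ := fun n => M * ((C * tstar) ^ n / n.factorial) with hu
  have hu0 : ∀ n, 0 ≤ u n := fun n => by
    have : (0:ℝ) ≤ (C * tstar) ^ n := pow_nonneg (mul_nonneg hC0 h0) n
    positivity
  have husum : Summable u := (Real.summable_pow_div_factorial (C * tstar)).mul_left M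
  have hψb : ∀ n, ∀ r ∈ Icc (0:ℝ) tstar, ‖psi tstar k w n r‖ ≤ u n := fun n r hr =>
    (psi_bound h0 hC0 hkC hM0 hM n r hr).trans (bnd_mono hC0 hM0 hr n)
  have hψc : ∀ n, Continuous (psi tstar k w n) := psi_cont h0 hk hw
  have hsumr : ∀ r ∈ Icc (0:ℝ) tstar, Summable fun n => psi tstar k w n r := fun r hr =>
    Summable.of_norm_bounded husum (fun n => hψb n r hr)
  set v : ℝ → X := fun t => ∑' n, psi tstar k w n t with hv
  have hvc : ContinuousOn v (Icc 0 tstar) :=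
    continuousOn_tsum (fun n => (hψc n).continuousOn) husum (fun n r hr => hψb n r hr)
  -- the integral equation
  have hveq : ∀ t ∈ Icc (0:ℝ) tstar, v t = w t + ∫ s in (0:ℝ)..t, k t s (v s) := by
    intro t ht
    have ht0 : (0:ℝ) ≤ t := ht.1
    set F : ℕ → ℝ → X := fun n s => kext tstar k t s (psi tstar k w n s) with hF
    have hFc : ∀ n, Continuous (F n) := fun n =>
      ((continuous_kext h0 hk).comp (continuous_const.prodMk continuous_id)).clm_apply (hψc n)
    have hFint : ∀ n, Integrable (F n) (volume.restrict (Ioc 0 t)) := fun n =>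
      (intervalIntegrable_iff_integrableOn_Ioc_of_le ht0).1 ((hFc n).intervalIntegrable 0 t)
    have hFnorm : ∀ n, ∫ s in Ioc (0:ℝ) t, ‖F n s‖ ≤ (C * u n) * t := by
      intro n
      have hb : ∀ s ∈ Ioc (0:ℝ) t, ‖F n s‖ ≤ C * u n := by
        intro s hs
        have hs' : s ∈ Icc (0:ℝ) tstar := ⟨hs.1.le, hs.2.trans ht.2⟩
        calc ‖F n s‖ ≤ ‖kext tstar k t s‖ * ‖psi tstar k w n s‖ :=
              ContinuousLinearMap.le_opNorm _ _
          _ ≤ C * u n := mul_le_mul (norm_kext_le h0 hkC t s) (hψb n s hs')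
              (norm_nonneg _) hC0
      have h1 : ‖∫ s in Ioc (0:ℝ) t, ‖F n s‖‖ ≤ (C * u n) * (volume (Ioc (0:ℝ) t)).toReal :=
        norm_setIntegral_le_of_norm_le_const measure_Ioc_lt_top
          (fun s hs => by
            rw [Real.norm_eq_abs, abs_of_nonneg (norm_nonneg _)]; exact hb s hs)
      calc ∫ s in Ioc (0:ℝ) t, ‖F n s‖ ≤ ‖∫ s in Ioc (0:ℝ) t, ‖F n s‖‖ :=
            le_abs_self _
        _ ≤ (C * u n) * (volume (Ioc (0:ℝ) t)).toReal := h1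
        _ = (C * u n) * t := by
            rw [Real.volume_Ioc, ENNReal.toReal_ofReal (by linarith), sub_zero]
    have hFsum : Summable fun n => ∫ s in Ioc (0:ℝ) t, ‖F n s‖ :=
      Summable.of_nonneg_of_le (fun n => integral_nonneg fun s => norm_nonneg _) hFnorm
        ((husum.mul_left C).mul_right t)
    have hswap := MeasureTheory.hasSum_integral_of_summable_integral_norm hFint hFsum
    have hks : ∀ s ∈ Ioc (0:ℝ) t, (∑' n, F n s) = kext tstar k t s (v s) := by
      intro s hs
      exact ((kext tstar k t s).map_tsum (hsumr s ⟨hs.1.le, hs.2.trans ht.2⟩)).symm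
    calc v t = psi tstar k w 0 t + ∑' n, psi tstar k w (n + 1) t :=
          Summable.tsum_eq_zero_add (hsumr t ht)
      _ = w t + ∫ s in (0:ℝ)..t, k t s (v s) := by
          congr 1
          · show w (pc tstar t) = w t
            rw [pc_eq ht]
          · calc (∑' n, psi tstar k w (n + 1) t)
                = ∑' n, ∫ s in Ioc (0:ℝ) t, F n s := by
                  refine tsum_congr fun n => ?_
                  simp only [psi]
                  exact intervalIntegral.integral_of_le ht0
              _ = ∫ s in Ioc (0:ℝ) t, ∑' n, F n s := hswap.tsum_eq
              _ = ∫ s in Ioc (0:ℝ) t, kext tstar k t s (v s) :=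
                  setIntegral_congr_fun measurableSet_Ioc hks
              _ = ∫ s in (0:ℝ)..t, kext tstar k t s (v s) :=
                  (intervalIntegral.integral_of_le ht0).symm
              _ = ∫ s in (0:ℝ)..t, k t s (v s) := by
                  apply intervalIntegral.integral_congr
                  intro s hs
                  rw [uIcc_of_le ht0] at hs
                  show (kext tstar k t s) (v s) = (k t s) (v s)
                  rw [kext_eq ht hs]
  refine ⟨v, hvc, hveq, ?_, ?_, ?_⟩
  · -- HasSum
    intro t ht
    have he : (fun n : ℕ => volterraIter k w n t) = fun n => psi tstar k w n t :=
      funext fun n => psi_agree h0 n t ht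
    rw [he]
    exact (hsumr t ht).hasSum
  · -- Summable sup
    apply Summable.of_nonneg_of_le
      (fun n => Real.iSup_nonneg fun t => Real.iSup_nonneg fun _ => norm_nonneg _)
      (fun n => ?_) husum
    apply Real.iSup_le _ (hu0 n)
    intro t
    apply Real.iSup_le _ (hu0 n)
    intro ht
    rw [psi_agree h0 n t ht]
    exact hψb n t ht
  · -- uniqueness
    intro v' hv' hveq' t ht
    have hint : ∀ (ρ : ℝ → X), ContinuousOn ρ (Icc 0 tstar) → ∀ r ∈ Icc (0:ℝ) tstar,
        IntervalIntegrable (fun s => kext tstar k r s (ρ s)) volume 0 r := by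
      intro ρ hρ r hr
      apply ContinuousOn.intervalIntegrable
      rw [uIcc_of_le hr.1]
      exact (((continuous_kext h0 hk).comp
        (continuous_const.prodMk continuous_id)).continuousOn).clm_apply
        (hρ.mono (Icc_subset_Icc le_rfl hr.2))
    have hke : ∀ (ρ : ℝ → X), ∀ r ∈ Icc (0:ℝ) tstar,
        (∫ s in (0:ℝ)..r, k r s (ρ s)) = ∫ s in (0:ℝ)..r, kext tstar k r s (ρ s) := by
      intro ρ r hr
      apply intervalIntegral.integral_congr
      intro s hs
      rw [uIcc_of_le hr.1] at hs
      show (k r s) (ρ s) = (kext tstar k r s) (ρ s)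
      rw [kext_eq hr hs]
    set d : ℝ → X := fun r => v' r - v r with hd
    have hdc : ContinuousOn d (Icc 0 tstar) := hv'.sub hvc
    obtain ⟨M₁, hM₁⟩ := isCompact_Icc.exists_bound_of_continuousOn hdc
    set Mu := max M₁ 0 with hMu
    have hMu0 : 0 ≤ Mu := le_max_right _ _
    have hMub : ∀ r ∈ Icc (0:ℝ) tstar, ‖d r‖ ≤ Mu := fun r hr =>
      (hM₁ r hr).trans (le_max_left _ _)
    have hde : ∀ r ∈ Icc (0:ℝ) tstar, d r = ∫ s in (0:ℝ)..r, kext tstar k r s (d s) := by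
      intro r hr
      have h1 := hveq' r hr
      have h2 := hveq r hr
      show v' r - v r = _
      rw [h1, h2, hke v' r hr, hke v r hr, add_sub_add_left_eq_sub,
        ← intervalIntegral.integral_sub (hint v' hv' r hr) (hint v hvc r hr)]
      apply intervalIntegral.integral_congr
      intro s hs
      show (kext tstar k r s) (v' s) - (kext tstar k r s) (v s)
          = (kext tstar k r s) (v' s - v s)
      rw [map_sub]
    have hdb : ∀ n, ∀ r ∈ Icc (0:ℝ) tstar,
        ‖d r‖ ≤ Mu * (C ^ n * r ^ n / n.factorial) := by
      intro n
      induction n with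
      | zero => intro r hr; simpa using hMub r hr
      | succ n ih =>
        intro r hr
        rw [hde r hr]
        exact bound_step h0 hC0 hkC hMu0 ih hr
    have hlim : Filter.Tendsto (fun n : ℕ => Mu * ((C * tstar) ^ n / n.factorial))
        Filter.atTop (nhds 0) := by
      have h := (Real.summable_pow_div_factorial (C * tstar)).tendsto_atTop_zero
      simpa using h.const_mul Mu
    have hle : ∀ n : ℕ, ‖d t‖ ≤ Mu * ((C * tstar) ^ n / n.factorial) := fun n =>
      (hdb n t ht).trans (bnd_mono hC0 hMu0 ht n)
    have hdt : ‖d t‖ ≤ 0 := ge_of_tendsto' hlim hle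
    have : d t = 0 := by
      have := norm_le_zero_iff.1 hdt
      exact this
    exact sub_eq_zero.1 this
end
end

section
/- (Covariance property.) Then the Lamb shift matrix commutes with the Hamiltonian, [δH, H] = 0, and the dissipator commutes with the derivation generated by H: G([H, ρ]) = [H, G(ρ)] for all ρ ∈ M_d(ℂ). -/
open Matrix

set_option linter.unreachableTactic false
set_option linter.unnecessarySeqFocus false

/-- Per-term covariance identity for the dissipator. -/
lemma stmt13_aux {d : ℕ} (H A B ρ : Matrix (Fin d) (Fin d) ℂ) (w : ℂ)
    (hA : H * A - A * H = w • A) (hB : H * B - B * H = -w • B) :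
    A * (H * ρ - ρ * H) * B - (1/2:ℂ) • (B * A * (H * ρ - ρ * H) + (H * ρ - ρ * H) * (B * A)) =
    H * (A * ρ * B - (1/2:ℂ) • (B * A * ρ + ρ * (B * A))) -
      (A * ρ * B - (1/2:ℂ) • (B * A * ρ + ρ * (B * A))) * H := by
  have h1 : H * B = B * H - w • B := by
    rw [sub_eq_iff_eq_add] at hB; rw [hB]; module
  have h2 : H * A = A * H + w • A := by
    rw [sub_eq_iff_eq_add] at hA; rw [hA]; module
  have hBA : H * (B * A) - (B * A) * H = 0 := by
    calc H * (B * A) - B * A * H = (H * B) * A - B * A * H := by noncomm_ring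
    _ = (B * H - w • B) * A - B * A * H := by rw [h1]
    _ = B * (H * A) - w • (B * A) - B * A * H := by noncomm_ring
    _ = B * (A * H + w • A) - w • (B * A) - B * A * H := by rw [h2]
    _ = 0 := by noncomm_ring
  linear_combination (norm := ((try noncomm_ring) <;> match_scalars <;> simp <;> ring))
    -(hA * (ρ * B)) - (A * ρ) * hB + (1/2:ℂ) • (hBA * ρ + ρ * hBA)

/-- `H` commutes with `S_b* S_a` when `ω_a = ω_b`. -/
lemma stmt13_comm {d : ℕ} (H A B : Matrix (Fin d) (Fin d) ℂ) (w : ℂ)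
    (hA : H * A - A * H = w • A) (hB : H * B - B * H = -w • B) :
    H * (B * A) = (B * A) * H := by
  have h1 : H * B = B * H - w • B := by
    rw [sub_eq_iff_eq_add] at hB; rw [hB]; module
  have h2 : H * A = A * H + w • A := by
    rw [sub_eq_iff_eq_add] at hA; rw [hA]; module
  have : H * (B * A) - (B * A) * H = 0 := by
    calc H * (B * A) - B * A * H = (H * B) * A - B * A * H := by noncomm_ring
    _ = (B * H - w • B) * A - B * A * H := by rw [h1]
    _ = B * (H * A) - w • (B * A) - B * A * H := by noncomm_ring
    _ = B * (A * H + w • A) - w • (B * A) - B * A * H := by rw [h2]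
    _ = 0 := by noncomm_ring
  exact sub_eq_zero.mp this

/-- covariance property: with eigenoperators `[H,S_a] = ω_a S_a`,
the Lamb shift matrix `δH = Σ_{ω_a=ω_b} ξ_{ba} S_b* S_a` commutes with `H`, and the
dissipator `G` commutes with the derivation generated by `H`. -/
theorem stmt13 {d : ℕ} {ι : Type*} [Fintype ι]
    (H : Matrix (Fin d) (Fin d) ℂ) (hH : Hᴴ = H)
    (S : ι → Matrix (Fin d) (Fin d) ℂ) (ω : ι → ℝ)
    (hS : ∀ a, H * S a - S a * H = (ω a : ℂ) • S a)
    (ξ γ : ι → ι → ℂ)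
    (δH : Matrix (Fin d) (Fin d) ℂ)
    (hδH : δH = ∑ a, ∑ b, if ω a = ω b then ξ b a • ((S b)ᴴ * S a) else 0)
    (G : Matrix (Fin d) (Fin d) ℂ → Matrix (Fin d) (Fin d) ℂ)
    (hG : ∀ ρ, G ρ = ∑ a, ∑ b, if ω a = ω b then
        γ b a • (S a * ρ * (S b)ᴴ -
          (1 / 2 : ℂ) • ((S b)ᴴ * S a * ρ + ρ * ((S b)ᴴ * S a)))
      else 0) :
    δH * H = H * δH ∧
    ∀ ρ : Matrix (Fin d) (Fin d) ℂ, G (H * ρ - ρ * H) = H * G ρ - G ρ * H := by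
  have hSadj : ∀ b, H * (S b)ᴴ - (S b)ᴴ * H = (-(ω b : ℂ)) • (S b)ᴴ := by
    intro b
    have h := congrArg conjTranspose (hS b)
    simp only [conjTranspose_sub, conjTranspose_mul, conjTranspose_smul, hH,
      Complex.star_def, Complex.conj_ofReal] at h
    linear_combination (norm := module) -h
  have key : ∀ a b, ω a = ω b → H * ((S b)ᴴ * S a) = ((S b)ᴴ * S a) * H := by
    intro a b hab
    refine stmt13_comm H (S a) ((S b)ᴴ) ((ω a : ℂ)) (hS a) ?_
    rw [hab] at *
    simpa using hSadj b
  constructor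
  · rw [hδH, Finset.sum_mul, Finset.mul_sum]
    refine Finset.sum_congr rfl fun a _ => ?_
    rw [Finset.sum_mul, Finset.mul_sum]
    refine Finset.sum_congr rfl fun b _ => ?_
    split_ifs with h
    · rw [smul_mul_assoc, mul_smul_comm, key a b h]
    · simp
  · intro ρ
    rw [hG, hG ρ, Finset.mul_sum, Finset.sum_mul, ← Finset.sum_sub_distrib]
    refine Finset.sum_congr rfl fun a _ => ?_
    rw [Finset.mul_sum, Finset.sum_mul, ← Finset.sum_sub_distrib]
    refine Finset.sum_congr rfl fun b _ => ?_
    split_ifs with h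
    · rw [mul_smul_comm, smul_mul_assoc, ← smul_sub]
      congr 1
      refine stmt13_aux H (S a) ((S b)ᴴ) ρ ((ω a : ℂ)) (hS a) ?_
      rw [h] at *
      simpa using hSadj b
    · simp
end
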